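/- Let R be a commutative ring and M an R-module. The trivial ring extension (idealization) R ⋉ M is a weakly Laskerian ring if and only if R is a weakly Laskerian ring and M is a weakly Laskerian R-module. -/

import Mathlib

/-- An `R`-module `M` is *weakly Laskerian* if every quotient of `M` has only finitely many
associated prime ideals. -/
def IsWeaklyLaskerian (R : Type*) [CommRing R] (M : Type*) [AddCommGroup M]
    [Module R M] : Prop :=
  ∀ N : Submodule R M, (associatedPrimes R (M ⧸ N)).Finite


section general
variable {R : Type*} [CommRing R] {X Y : Type*} [AddCommGroup X] [Module R X]
  [AddCommGroup Y] [Module R Y]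

theorem assFinite_of_surjective (f : X →ₗ[R] Y) (hf : Function.Surjective f)
    (h : IsWeaklyLaskerian R X) : (associatedPrimes R Y).Finite := by
  have := h (LinearMap.ker f)
  rwa [LinearEquiv.AssociatedPrimes.eq (f.quotKerEquivOfSurjective hf)] at this

theorem isWeaklyLaskerian_of_surjective (f : X →ₗ[R] Y) (hf : Function.Surjective f)
    (h : IsWeaklyLaskerian R X) : IsWeaklyLaskerian R Y := fun K =>
  assFinite_of_surjective (K.mkQ.comp f) ((Submodule.mkQ_surjective K).comp hf) h

theorem isWeaklyLaskerian_of_injective (f : X →ₗ[R] Y) (hf : Function.Injective f)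
    (h : IsWeaklyLaskerian R Y) : IsWeaklyLaskerian R X := by
  intro K
  refine Set.Finite.subset (h (K.map f)) (associatedPrimes.subset_of_injective
    (f := Submodule.mapQ K (K.map f) f (Submodule.le_comap_map f K)) ?_)
  rw [← LinearMap.ker_eq_bot, Submodule.mapQ, Submodule.ker_liftQ_eq_bot]
  · rw [LinearMap.ker_comp, Submodule.ker_mkQ, Submodule.comap_map_eq_of_injective hf]

theorem ass_subset_union (S : Submodule R X) :
    associatedPrimes R X ⊆ associatedPrimes R S ∪ associatedPrimes R (X ⧸ S) := by
  exact associatedPrimes.subset_union_of_exact Subtype.val_injective (LinearMap.exact_subtype_mkQ S)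

end general

section general2
variable {R : Type*} [CommRing R] {X : Type*} [AddCommGroup X] [Module R X]


theorem isWeaklyLaskerian_of_ext {S : Submodule R X}
    (h1 : IsWeaklyLaskerian R S) (h2 : IsWeaklyLaskerian R (X ⧸ S)) :
    IsWeaklyLaskerian R X := by
  intro K
  refine Set.Finite.subset (Set.Finite.union ?_ ?_) (ass_subset_union (S.map K.mkQ))
  · have e : LinearMap.range (K.mkQ.comp S.subtype) = S.map K.mkQ := by
      rw [LinearMap.range_comp, Submodule.range_subtype]
    have fin := assFinite_of_surjective (K.mkQ.comp S.subtype).rangeRestrict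
      (LinearMap.surjective_rangeRestrict _) h1
    exact e ▸ fin
  · have hle : S ≤ LinearMap.ker ((S.map K.mkQ).mkQ.comp K.mkQ) := by
      intro x hx
      rw [LinearMap.mem_ker, LinearMap.comp_apply, Submodule.mkQ_apply, Submodule.mkQ_apply,
        Submodule.Quotient.mk_eq_zero]
      exact Submodule.mem_map_of_mem hx
    refine assFinite_of_surjective (S.liftQ ((S.map K.mkQ).mkQ.comp K.mkQ) hle) ?_ h2
    rw [← LinearMap.range_eq_top, Submodule.range_liftQ, LinearMap.range_eq_top]
    exact (Submodule.mkQ_surjective _).comp (Submodule.mkQ_surjective K)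

end general2

section tsze
open TrivSqZeroExt

variable {R : Type*} [CommRing R] {M : Type*} [AddCommGroup M] [Module R M] [Module Rᵐᵒᵖ M] [IsCentralScalar R M]

/-- The idealization `p ⋉ M` of an ideal `p` of `R`. -/
def idealize (p : Ideal R) : Ideal (TrivSqZeroExt R M) :=
  p.comap (fstHom R R M)

theorem mem_idealize {p : Ideal R} {x : TrivSqZeroExt R M} :
    x ∈ (idealize p : Ideal (TrivSqZeroExt R M)) ↔ x.fst ∈ p := Iff.rfl

theorem idealize_injective :
    Function.Injective (idealize (R := R) (M := M)) := by
  intro p q h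
  ext r
  exact SetLike.ext_iff.mp h (inl r)

theorem idealize_isPrime {p : Ideal R} (hp : p.IsPrime) :
    (idealize p : Ideal (TrivSqZeroExt R M)).IsPrime := by
  haveI := hp
  exact Ideal.IsPrime.comap _

theorem isPrime_eq_idealize (P : Ideal (TrivSqZeroExt R M)) (hP : P.IsPrime) :
    P = idealize (P.comap (inlHom R M)) := by
  have hm : ∀ m : M, inr m ∈ P := fun m =>
    hP.mem_of_pow_mem 2 (by rw [pow_two, inr_mul_inr]; exact P.zero_mem)
  ext x
  rw [mem_idealize, Ideal.mem_comap, inlHom_apply]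
  constructor
  · intro hx
    have := P.sub_mem hx (hm x.snd)
    rwa [show x - inr x.snd = inl x.fst from
      (eq_sub_of_add_eq (inl_fst_add_inr_snd_eq x)).symm] at this
  · intro hx
    have := P.add_mem hx (hm x.snd)
    rwa [inl_fst_add_inr_snd_eq x] at this

end tsze


section tsze2
open TrivSqZeroExt

variable {R : Type*} [CommRing R] {M : Type*} [AddCommGroup M] [Module R M] [Module Rᵐᵒᵖ M]
  [IsCentralScalar R M]

/-- `fst` as a linear map. -/
def fstL : TrivSqZeroExt R M →ₗ[R] R where
  toFun := fst
  map_add' := fst_add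
  map_smul' := fst_smul

theorem ker_fstL : LinearMap.ker (fstL (R := R) (M := M)) = LinearMap.range (inrHom R M) := by
  ext x
  rw [LinearMap.mem_ker, LinearMap.mem_range]
  constructor
  · intro h
    refine ⟨x.snd, ?_⟩
    have h2 := inl_fst_add_inr_snd_eq x
    rw [show x.fst = 0 from h, inl_zero, zero_add] at h2
    exact h2
  · rintro ⟨m, rfl⟩
    show (inr m : TrivSqZeroExt R M).fst = 0
    simp

theorem isWeaklyLaskerian_tsze (h1 : IsWeaklyLaskerian R R) (h2 : IsWeaklyLaskerian R M) :
    IsWeaklyLaskerian R (TrivSqZeroExt R M) := by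
  refine isWeaklyLaskerian_of_ext (S := LinearMap.range (inrHom R M)) ?_ ?_
  · exact isWeaklyLaskerian_of_surjective
      (LinearEquiv.ofInjective (inrHom R M) inr_injective).toLinearMap
      (LinearEquiv.ofInjective (inrHom R M) inr_injective).surjective h2
  · have e := (fstL (R := R) (M := M)).quotKerEquivOfSurjective
      (fun r => ⟨inl r, by simp [fstL]⟩)
    rw [ker_fstL] at e
    exact isWeaklyLaskerian_of_surjective e.symm.toLinearMap e.symm.surjective h1

theorem wlA_of (h1 : IsWeaklyLaskerian R R) (h2 : IsWeaklyLaskerian R M) :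
    IsWeaklyLaskerian (TrivSqZeroExt R M) (TrivSqZeroExt R M) := by
  have hA := isWeaklyLaskerian_tsze h1 h2
  intro N
  have hR : (associatedPrimes R (TrivSqZeroExt R M ⧸ N)).Finite :=
    assFinite_of_surjective (N.mkQ.restrictScalars R)
      (fun y => Submodule.mkQ_surjective N y) hA
  refine Set.Finite.of_finite_image
    (f := fun P => P.comap (algebraMap R (TrivSqZeroExt R M))) (hR.subset ?_) ?_
  · rintro _ ⟨P, ⟨hPp, x, hx⟩, rfl⟩
    haveI := hPp
    refine ⟨Ideal.IsPrime.comap _, x, ?_⟩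
    ext r
    rw [Ideal.mem_comap, hx]
    simp_rw [Ideal.mem_radical_iff, Submodule.mem_colon_singleton, Submodule.mem_bot, ← map_pow,
      algebraMap_smul]
  · intro P hP Q hQ hPQ
    rw [isPrime_eq_idealize P hP.isPrime, isPrime_eq_idealize Q hQ.isPrime]
    rw [show (inlHom R M) = algebraMap R (TrivSqZeroExt R M) from
      (algebraMap_eq_inlHom R M).symm]
    exact congrArg _ hPQ

theorem wlR_of (h : IsWeaklyLaskerian (TrivSqZeroExt R M) (TrivSqZeroExt R M)) :
    IsWeaklyLaskerian R R := by
  intro I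
  refine Set.Finite.of_finite_image (Set.Finite.subset (h (idealize I)) ?_)
    (idealize_injective.injOn)
  rintro _ ⟨p, ⟨hp, x, hx⟩, rfl⟩
  obtain ⟨r, rfl⟩ := Submodule.Quotient.mk_surjective I x
  refine ⟨idealize_isPrime hp, Submodule.Quotient.mk (inl r), ?_⟩
  ext a
  rw [mem_idealize, hx]
  simp_rw [Ideal.mem_radical_iff, Submodule.mem_colon_singleton, Submodule.mem_bot,
    ← Submodule.Quotient.mk_smul, Submodule.Quotient.mk_eq_zero, smul_eq_mul, mem_idealize,
    fst_mul, fst_inl, fst_pow]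

/-- The ideal `0 ⋉ K` of `R ⋉ M`. -/
def inrIdeal (K : Submodule R M) : Ideal (TrivSqZeroExt R M) where
  carrier := {x | x.fst = 0 ∧ x.snd ∈ K}
  zero_mem' := ⟨fst_zero, snd_zero (R := R) (M := M) ▸ K.zero_mem⟩
  add_mem' := fun ha hb => ⟨by rw [fst_add, ha.1, hb.1, add_zero],
    by rw [snd_add]; exact K.add_mem ha.2 hb.2⟩
  smul_mem' := by
    intro c x hx
    constructor
    · show (c * x).fst = 0
      rw [fst_mul, hx.1, mul_zero]
    · show (c * x).snd ∈ K
      rw [snd_mul, hx.1, MulOpposite.op_zero, zero_smul, add_zero]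
      exact K.smul_mem _ hx.2

theorem mem_inrIdeal {K : Submodule R M} {x : TrivSqZeroExt R M} :
    x ∈ inrIdeal K ↔ x.fst = 0 ∧ x.snd ∈ K := Iff.rfl

theorem wlM_of (h : IsWeaklyLaskerian (TrivSqZeroExt R M) (TrivSqZeroExt R M)) :
    IsWeaklyLaskerian R M := by
  intro K
  refine Set.Finite.of_finite_image (Set.Finite.subset (h (inrIdeal K)) ?_)
    (idealize_injective.injOn)
  rintro _ ⟨p, ⟨hp, x, hx⟩, rfl⟩
  obtain ⟨m, rfl⟩ := Submodule.Quotient.mk_surjective K x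
  refine ⟨idealize_isPrime hp, Submodule.Quotient.mk (inr m), ?_⟩
  ext a
  rw [mem_idealize, hx]
  simp_rw [Ideal.mem_radical_iff, Submodule.mem_colon_singleton, Submodule.mem_bot,
    ← Submodule.Quotient.mk_smul, Submodule.Quotient.mk_eq_zero, smul_eq_mul, mem_inrIdeal,
    fst_mul, fst_inr, mul_zero, snd_mul, fst_inr, MulOpposite.op_zero, zero_smul, add_zero,
    snd_inr, fst_pow]
  simp

end tsze2


/-- The trivial ring extension (idealization) `R ⋉ M` is a weakly Laskerian ring if and
only if `R` is a weakly Laskerian ring and `M` is a weakly Laskerian `R`-module. -/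
theorem trivSqZeroExt_isWeaklyLaskerian_iff {R M : Type*} [CommRing R] [AddCommGroup M]
    [Module R M] [Module Rᵐᵒᵖ M] [IsCentralScalar R M] :
    IsWeaklyLaskerian (TrivSqZeroExt R M) (TrivSqZeroExt R M) ↔
      IsWeaklyLaskerian R R ∧ IsWeaklyLaskerian R M := by
  exact ⟨fun h => ⟨wlR_of h, wlM_of h⟩, fun h => wlA_of h.1 h.2⟩
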